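/- Let ν > 0, η ≥ 0 and denote by ū_η the unique minimizer over U_ad of J_η(u) = ½‖S(f+u) − w_d‖² + (ν/2)‖u‖² + η‖u‖_{L¹}. If 0 ∈ U_ad and η ≥ ‖S*(S f − w_d)‖_{L^∞(I)}, then ū_η = 0. -/

import Mathlib

open MeasureTheory Set RealInnerProductSpace

/-- if `0 ∈ U_ad` and `η ≥ ‖S*(Sf − w_d)‖_{L^∞(I)}` (encoded as
`|S*(Sf − w_d)(x)| ≤ η` a.e.), then the unique minimizer of
`J_η(u) = ½‖S(f+u) − w_d‖² + (ν/2)‖u‖² + η‖u‖_{L¹}` over `U_ad` is `ū_η = 0`. -/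
theorem sparse_control_vanishes_for_large_eta
    (L : ℝ) (hL : 0 < L)
    (S : Lp ℝ 2 (volume.restrict (Ioo (0:ℝ) L)) →L[ℝ] Lp ℝ 2 (volume.restrict (Ioo (0:ℝ) L)))
    (hS : Function.Injective S)
    (w_d f : Lp ℝ 2 (volume.restrict (Ioo (0:ℝ) L)))
    (ν η : ℝ) (hν : 0 < ν) (hη : 0 ≤ η)
    (Uad : Set (Lp ℝ 2 (volume.restrict (Ioo (0:ℝ) L))))
    (hcl : IsClosed Uad) (hcv : Convex ℝ Uad) (h0 : 0 ∈ Uad)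
    (hbound : ∀ᵐ x ∂(volume.restrict (Ioo (0:ℝ) L)),
      |(ContinuousLinearMap.adjoint S (S f - w_d)) x| ≤ η)
    (ubar : Lp ℝ 2 (volume.restrict (Ioo (0:ℝ) L)))
    (hubar : ubar ∈ Uad)
    (hmin : ∀ v ∈ Uad,
      (1/2) * ‖S (f + ubar) - w_d‖^2 + (ν/2) * ‖ubar‖^2
          + η * ∫ x, |ubar x| ∂(volume.restrict (Ioo (0:ℝ) L)) ≤
        (1/2) * ‖S (f + v) - w_d‖^2 + (ν/2) * ‖v‖^2
          + η * ∫ x, |v x| ∂(volume.restrict (Ioo (0:ℝ) L))) :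
    ubar = 0 := by
  haveI : IsFiniteMeasure (volume.restrict (Ioo (0:ℝ) L)) := by
    constructor
    rw [Measure.restrict_apply_univ, Real.volume_Ioo]
    exact ENNReal.ofReal_lt_top
  have key := hmin 0 h0
  have hz : ∫ x, |(0 : Lp ℝ 2 (volume.restrict (Ioo (0:ℝ) L))) x|
      ∂(volume.restrict (Ioo (0:ℝ) L)) = 0 := by
    have hz0 : (fun x => |(0 : Lp ℝ 2 (volume.restrict (Ioo (0:ℝ) L))) x|)
        =ᵐ[volume.restrict (Ioo (0:ℝ) L)] fun _ => (0:ℝ) :=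
      (Lp.coeFn_zero ℝ 2 _).mono fun x hx => by
        simp only [hx, Pi.zero_apply, abs_zero]
    rw [integral_congr_ae hz0, integral_zero]
  rw [add_zero, norm_zero, hz, mul_zero, add_zero] at key
  norm_num at key
  have hrw : S f + S ubar - w_d = (S f - w_d) + S ubar := by abel
  rw [hrw, norm_add_sq_real] at key
  have hinner : ⟪S f - w_d, S ubar⟫
      = ∫ x, (ContinuousLinearMap.adjoint S (S f - w_d)) x * ubar x
          ∂(volume.restrict (Ioo (0:ℝ) L)) := by
    rw [← ContinuousLinearMap.adjoint_inner_left S ubar (S f - w_d), L2.inner_def]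
    simp [RCLike.inner_apply]
    exact integral_congr_ae (Filter.Eventually.of_forall fun a => mul_comm _ _)
  have hpu : Integrable
      (fun x => (ContinuousLinearMap.adjoint S (S f - w_d)) x * ubar x)
      (volume.restrict (Ioo (0:ℝ) L)) := by
    have := L2.integrable_inner (𝕜 := ℝ) (ContinuousLinearMap.adjoint S (S f - w_d)) ubar
    simpa [RCLike.inner_apply, mul_comm] using this
  have hub_int : Integrable (fun x => |ubar x|) (volume.restrict (Ioo (0:ℝ) L)) :=
    ((Lp.memLp ubar).integrable (by norm_num)).abs
  have h1 : |∫ x, (ContinuousLinearMap.adjoint S (S f - w_d)) x * ubar x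
        ∂(volume.restrict (Ioo (0:ℝ) L))|
      ≤ ∫ x, |(ContinuousLinearMap.adjoint S (S f - w_d)) x * ubar x|
        ∂(volume.restrict (Ioo (0:ℝ) L)) :=
    by simpa only [Real.norm_eq_abs] using norm_integral_le_integral_norm (μ := volume.restrict (Ioo (0:ℝ) L)) (fun x => (ContinuousLinearMap.adjoint S (S f - w_d)) x * ubar x)
  have h2 : ∫ x, |(ContinuousLinearMap.adjoint S (S f - w_d)) x * ubar x|
        ∂(volume.restrict (Ioo (0:ℝ) L))
      ≤ ∫ x, η * |ubar x| ∂(volume.restrict (Ioo (0:ℝ) L)) := by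
    refine integral_mono_ae hpu.abs (hub_int.const_mul η) ?_
    filter_upwards [hbound] with x hx
    rw [abs_mul]
    exact mul_le_mul_of_nonneg_right hx (abs_nonneg _)
  rw [integral_const_mul] at h2
  rw [hinner] at key
  have hI := h1.trans h2
  have hSu : (0:ℝ) ≤ ‖S ubar‖^2 := sq_nonneg _
  have hnorm : ‖ubar‖^2 ≤ 0 := by
    nlinarith [abs_le.mp hI]
  have hn : ‖ubar‖ = 0 := by
    have h := le_antisymm hnorm (sq_nonneg ‖ubar‖)
    exact pow_eq_zero_iff (n := 2) (by norm_num) |>.mp h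
  exact norm_eq_zero.mp hn
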